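/- Let V be a 6-dimensional complex vector space, vol : ⋀⁶V → ℂ a fixed linear isomorphism, and (α, β)_V := vol(α ∧ β) the induced symplectic form on ⋀³V. For every nonzero v ∈ V, the subspace F_v := {α ∈ ⋀³V : v ∧ α = 0} satisfies: (α, β)_V = 0 for all α, β ∈ F_v, and dim F_v = 10. In other words, F_v is a Lagrangian subspace of the 20-dimensional symplectic vector space ⋀³V. -/

import Mathlib

/-- The `k`-th exterior power of `V`, realized as a submodule of the exterior
algebra of `V`. -/
noncomputable def extPow (V : Type*) [AddCommGroup V] [Module ℂ V] (k : ℕ) :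
    Submodule ℂ (ExteriorAlgebra ℂ V) :=
  LinearMap.range (ExteriorAlgebra.ι ℂ : V →ₗ[ℂ] ExteriorAlgebra ℂ V) ^ k

/-- Given a linear functional `vol` on `⋀⁶V`, the pairing `(α, β) ↦ vol (α ∧ β)`
on `⋀³V`. -/
noncomputable def wedgeForm (V : Type*) [AddCommGroup V] [Module ℂ V]
    (vol : (extPow V 6) →ₗ[ℂ] ℂ) (α β : ExteriorAlgebra ℂ V)
    (hα : α ∈ extPow V 3) (hβ : β ∈ extPow V 3) : ℂ :=
  vol ⟨α * β, by
    have h : extPow V 6 = extPow V 3 * extPow V 3 := by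
      unfold extPow
      rw [show (6 : ℕ) = 3 + 3 from rfl, pow_add]
    rw [h]
    exact Submodule.mul_mem_mul hα hβ⟩

/-- `F_v := {α ∈ ⋀³V : v ∧ α = 0}`, as a submodule of the exterior algebra. -/
noncomputable def Fv (V : Type*) [AddCommGroup V] [Module ℂ V] (v : V) :
    Submodule ℂ (ExteriorAlgebra ℂ V) :=
  extPow V 3 ⊓ LinearMap.ker (LinearMap.mulLeft ℂ (ExteriorAlgebra.ι ℂ v))


open ExteriorAlgebra

namespace FvAux

variable {V : Type*} [AddCommGroup V] [Module ℂ V]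

lemma iota_swap (x y : V) : ι ℂ x * ι ℂ y = -(ι ℂ y * ι ℂ x) := by
  have h := ι_sq_zero (R := ℂ) (x + y)
  rw [map_add, add_mul, mul_add, mul_add, ι_sq_zero, ι_sq_zero, zero_add, add_zero] at h
  exact eq_neg_of_add_eq_zero_left h

lemma pair_zero (v x y z w : V) :
    (ι ℂ v * (ι ℂ x * ι ℂ y)) * (ι ℂ v * (ι ℂ z * ι ℂ w)) = 0 := by
  have h1 : ι ℂ v * (ι ℂ x * ι ℂ y) = (ι ℂ x * ι ℂ y) * ι ℂ v := by
    rw [← mul_assoc, iota_swap v x, neg_mul, mul_assoc, iota_swap v y, mul_neg, neg_neg,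
      ← mul_assoc]
  rw [h1, mul_assoc, ← mul_assoc (ι ℂ v), ι_sq_zero, zero_mul, mul_zero]

lemma iota_mul_ιMulti (x : V) {k : ℕ} (y : Fin k → V) :
    ι ℂ x * ιMulti ℂ k y = ιMulti ℂ (k + 1) (Fin.cons x y) := by
  rw [ιMulti_succ_apply, Fin.cons_zero]
  congr 1

variable (b : Module.Basis (Fin 6) ℂ V)

/-- The basis monomial of degree `k` associated to a subset `S` of `Fin 6` of cardinality `k`. -/
noncomputable def monF (k : ℕ) (S : {S : Finset (Fin 6) // S.card = k}) :
    ExteriorAlgebra ℂ V :=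
  ιMulti ℂ k fun i => b (S.1.orderEmbOfFin S.2 i)

lemma monF_mem (k : ℕ) (S : {S : Finset (Fin 6) // S.card = k}) :
    monF b k S ∈ ⋀[ℂ]^k V :=
  ιMulti_range ℂ k (Set.mem_range_self _)

/-- The dual functional detecting the monomial `monF b k S`. -/
noncomputable def dualF (k : ℕ) (S : {S : Finset (Fin 6) // S.card = k}) :
    ExteriorAlgebra ℂ V →ₗ[ℂ] ℂ :=
  liftAlternating (Function.update (fun n => (0 : V [⋀^Fin n]→ₗ[ℂ] ℂ)) k
    ((Matrix.detRowAlternating : (Fin k → ℂ) [⋀^Fin k]→ₗ[ℂ] ℂ).compLinearMap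
      (LinearMap.pi fun j => b.coord (S.1.orderEmbOfFin S.2 j))))

lemma dualF_monF (k : ℕ) (S T : {S : Finset (Fin 6) // S.card = k}) :
    dualF b k S (monF b k T) = if S = T then 1 else 0 := by
  rw [monF, dualF, liftAlternating_apply_ιMulti, Function.update_self,
    AlternatingMap.compLinearMap_apply]
  have hdet : ∀ f : Fin k → (Fin k → ℂ),
      (Matrix.detRowAlternating : (Fin k → ℂ) [⋀^Fin k]→ₗ[ℂ] ℂ) f = Matrix.det (Matrix.of f) :=
    fun f => rfl
  rw [hdet]
  by_cases h : S = T
  · subst h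
    rw [if_pos rfl]
    have h1 : (Matrix.of fun i =>
        (LinearMap.pi fun j' => b.coord (S.1.orderEmbOfFin S.2 j')) (b (S.1.orderEmbOfFin S.2 i)))
        = (1 : Matrix (Fin k) (Fin k) ℂ) := by
      ext i j
      simp [LinearMap.pi_apply, Module.Basis.coord_apply, Module.Basis.repr_self, Finsupp.single_apply,
        Matrix.one_apply, (S.1.orderEmbOfFin S.2).injective.eq_iff, eq_comm]
    rw [h1, Matrix.det_one]
  · rw [if_neg h]
    have hne : T.1 ≠ S.1 := fun hh => h (Subtype.ext hh.symm)
    have hns : ¬ T.1 ⊆ S.1 := fun hsub =>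
      hne (Finset.eq_of_subset_of_card_le hsub (by rw [S.2, T.2]))
    obtain ⟨x, hxT, hxS⟩ := Finset.not_subset.mp hns
    have hx : x ∈ Set.range (T.1.orderEmbOfFin T.2) := by
      rw [Finset.range_orderEmbOfFin]; exact hxT
    obtain ⟨i, hi⟩ := hx
    apply Matrix.det_eq_zero_of_row_eq_zero i
    intro j
    have : T.1.orderEmbOfFin T.2 i ≠ S.1.orderEmbOfFin S.2 j := by
      rw [hi]; intro hc; exact hxS (hc ▸ Finset.orderEmbOfFin_mem S.1 S.2 j)
    simp [LinearMap.pi_apply, Module.Basis.coord_apply, Module.Basis.repr_self, Finsupp.single_apply, this]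

lemma monF_li (k : ℕ) : LinearIndependent ℂ (monF b k) := by
  rw [Fintype.linearIndependent_iff]
  intro g hg S
  have h1 := congrArg (dualF b k S) hg
  rw [map_sum, map_zero] at h1
  simp only [map_smul, dualF_monF, smul_eq_mul, mul_ite, mul_one, mul_zero,
    Finset.sum_ite_eq, Finset.mem_univ, if_pos] at h1
  exact h1

lemma monF_span (k : ℕ) :
    Submodule.span ℂ (Set.range (monF b k)) = ⋀[ℂ]^k V := by
  apply le_antisymm
  · rw [Submodule.span_le]
    rintro _ ⟨S, rfl⟩
    exact monF_mem b k S
  · rw [← ιMulti_span_fixedDegree ℂ k, Submodule.span_le]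
    rintro _ ⟨y, rfl⟩
    have hy : y = fun i => ∑ j, b.repr (y i) j • b j :=
      funext fun i => (b.sum_repr (y i)).symm
    rw [show (ιMulti ℂ k y : ExteriorAlgebra ℂ V)
        = (ιMulti ℂ k).toMultilinearMap (fun i => ∑ j, b.repr (y i) j • b j) from by
      rw [← hy]; rfl]
    rw [MultilinearMap.map_sum]
    apply Submodule.sum_mem
    intro r _
    rw [show ((ιMulti ℂ k).toMultilinearMap fun i => b.repr (y i) (r i) • b (r i))
        = (∏ i, b.repr (y i) (r i)) • ιMulti ℂ k (fun i => b (r i)) from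
      (ιMulti ℂ k).toMultilinearMap.map_smul_univ _ _]
    apply Submodule.smul_mem
    by_cases hr : Function.Injective r
    · set S : Finset (Fin 6) := Finset.univ.image r with hSdef
      have hS : S.card = k := by
        rw [hSdef, Finset.card_image_of_injective _ hr, Finset.card_univ, Fintype.card_fin]
      have hmem : ∀ i, r i ∈ S := fun i => Finset.mem_image_of_mem r (Finset.mem_univ i)
      let q : Fin k → {x // x ∈ S} := fun i => ⟨r i, hmem i⟩
      have hqinj : Function.Injective q := fun a c hac => hr (congrArg Subtype.val hac)
      have hqbij : Function.Bijective q :=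
        (Fintype.bijective_iff_injective_and_card q).mpr
          ⟨hqinj, by simp [Fintype.card_coe, hS]⟩
      let σ : Equiv.Perm (Fin k) :=
        (Equiv.ofBijective q hqbij).trans (S.orderIsoOfFin hS).toEquiv.symm
      have hre : ∀ i, r i = S.orderEmbOfFin hS (σ i) := by
        intro i
        have h2 : (S.orderIsoOfFin hS) (σ i) = q i := by
          simp [σ]
        have h3 : ((S.orderIsoOfFin hS) (σ i) : Fin 6) = r i := by rw [h2]
        rw [← Finset.coe_orderIsoOfFin_apply, h3]
      have : (fun i => b (r i)) = (fun i => b (S.orderEmbOfFin hS i)) ∘ σ := by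
        funext i; simp [Function.comp, ← hre i]
      rw [this, AlternatingMap.map_perm]
      rcases Int.units_eq_one_or (Equiv.Perm.sign σ) with hs | hs <;> rw [hs]
      · rw [one_smul]
        exact Submodule.subset_span ⟨⟨S, hS⟩, rfl⟩
      · rw [Units.neg_smul, one_smul]
        exact Submodule.neg_mem _ (Submodule.subset_span ⟨⟨S, hS⟩, rfl⟩)
    · have hbr : ¬ Function.Injective fun i => b (r i) :=
        fun hc => hr (Function.Injective.of_comp (f := b) hc)
      rw [(ιMulti ℂ k).map_eq_zero_of_not_injective _ hbr]
      exact Submodule.zero_mem _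



/-- A helper to transfer span membership into a submodule. -/
lemma mem_span_of_val_mem_span {A : Type*} [AddCommGroup A] [Module ℂ A]
    (p : Submodule ℂ A) {ι' : Type*} (u : ι' → p) (x : p)
    (h : (x : A) ∈ Submodule.span ℂ (Set.range fun j => (u j : A))) :
    x ∈ Submodule.span ℂ (Set.range u) := by
  have heq : (Set.range fun j => (u j : A)) = p.subtype '' Set.range u := by
    rw [← Set.range_comp]; rfl
  rw [heq, ← Submodule.map_span] at h
  obtain ⟨y, hy, hyx⟩ := h
  rwa [show y = x from Subtype.ext hyx] at hy

lemma vol_aux {A : Type*} [AddCommGroup A] [Module ℂ A] (p : Submodule ℂ A)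
    (vol : p →ₗ[ℂ] ℂ) (x : A) (hx : x ∈ p) (h : x = 0) : vol ⟨x, hx⟩ = 0 := by
  subst h
  rw [show (⟨0, hx⟩ : p) = 0 from rfl, map_zero]


section WithV

variable (v : V)

lemma mul_monF_of_mem (hb0 : b 0 = v) (S : {S : Finset (Fin 6) // S.card = 3}) (h0 : (0 : Fin 6) ∈ S.1) :
    ι ℂ v * monF b 3 S = 0 := by
  rw [monF, iota_mul_ιMulti]
  have hx : (0 : Fin 6) ∈ Set.range (S.1.orderEmbOfFin S.2) := by
    rw [Finset.range_orderEmbOfFin]; exact h0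
  obtain ⟨i0, hi0⟩ := hx
  refine AlternatingMap.map_eq_zero_of_eq _ _ (i := 0) (j := i0.succ) ?_ (Fin.succ_ne_zero i0).symm
  rw [Fin.cons_zero, Fin.cons_succ, hi0, hb0]

lemma mul_monF_of_not_mem (hb0 : b 0 = v) (S : {S : Finset (Fin 6) // S.card = 3}) (h0 : (0 : Fin 6) ∉ S.1) :
    ι ℂ v * monF b 3 S =
      monF b 4 ⟨insert 0 S.1, by rw [Finset.card_insert_of_notMem h0, S.2]⟩ := by
  rw [monF, monF, iota_mul_ιMulti]
  have hcard : (insert (0 : Fin 6) S.1).card = 4 := by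
    rw [Finset.card_insert_of_notMem h0, S.2]
  have hemb : (Fin.cons 0 (fun i => S.1.orderEmbOfFin S.2 i) : Fin 4 → Fin 6)
      = (insert 0 S.1).orderEmbOfFin hcard := by
    apply Finset.orderEmbOfFin_unique
    · intro x
      refine Fin.cases ?_ ?_ x
      · rw [Fin.cons_zero]; exact Finset.mem_insert_self _ _
      · intro i; rw [Fin.cons_succ]
        exact Finset.mem_insert_of_mem (Finset.orderEmbOfFin_mem S.1 S.2 i)
    · rw [Fin.strictMono_iff_lt_succ]
      intro i
      refine Fin.cases ?_ ?_ i
      · rw [Fin.castSucc_zero, Fin.cons_zero, Fin.cons_succ]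
        refine Fin.pos_of_ne_zero ?_
        intro hc
        exact h0 (hc ▸ Finset.orderEmbOfFin_mem S.1 S.2 0)
      · intro j
        rw [← Fin.succ_castSucc, Fin.cons_succ, Fin.cons_succ]
        exact (S.1.orderEmbOfFin S.2).strictMono (Fin.castSucc_lt_succ (i := j))
  have harg : (Fin.cons v (fun i => b (S.1.orderEmbOfFin S.2 i)) : Fin 4 → V)
      = fun i => b ((insert 0 S.1).orderEmbOfFin hcard i) := by
    funext i
    rw [← hemb]
    refine Fin.cases ?_ ?_ i
    · rw [Fin.cons_zero, Fin.cons_zero, hb0]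
    · intro j; rw [Fin.cons_succ, Fin.cons_succ]
  rw [harg]

lemma monF_factor (hb0 : b 0 = v) (S : {S : Finset (Fin 6) // S.card = 3})
    (h0 : (0 : Fin 6) ∈ S.1) :
    ∃ x y : V, monF b 3 S = ι ℂ v * (ι ℂ x * ι ℂ y) := by
  have hx : (0 : Fin 6) ∈ Set.range (S.1.orderEmbOfFin S.2) := by
    rw [Finset.range_orderEmbOfFin]; exact h0
  obtain ⟨i, hi⟩ := hx
  have h00 : S.1.orderEmbOfFin S.2 0 = 0 :=
    le_antisymm (hi ▸ (S.1.orderEmbOfFin S.2).monotone (Fin.zero_le i)) (Fin.zero_le _)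
  refine ⟨b (S.1.orderEmbOfFin S.2 (Fin.succ 0)),
    b (S.1.orderEmbOfFin S.2 (Fin.succ (Fin.succ 0))), ?_⟩
  simp only [monF, ιMulti_succ_apply, ιMulti_zero_apply, mul_one, Matrix.vecTail,
    Function.comp_def]
  rw [h00, hb0]


/-- The index type for the monomial basis of `F_v`. -/
abbrev J := {S : Finset (Fin 6) // S.card = 3 ∧ (0 : Fin 6) ∈ S}

/-- The monomials lying in `F_v`. -/
noncomputable def monJ (S : J) : ExteriorAlgebra ℂ V :=
  monF b 3 ⟨S.1, S.2.1⟩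

lemma span_Fv (hb0 : b 0 = v) :
    ∀ α, α ∈ extPow V 3 → ι ℂ v * α = 0 →
      α ∈ Submodule.span ℂ (Set.range (monJ b)) := by
  intro α h3 hker
  have h3' : α ∈ Submodule.span ℂ (Set.range (monF b 3)) := by
    rw [monF_span b 3]; exact h3
  rw [Submodule.mem_span_range_iff_exists_fun] at h3'
  obtain ⟨c, hc⟩ := h3'
  have hsum : ∑ S : {S : Finset (Fin 6) // S.card = 3}, c S • (ι ℂ v * monF b 3 S) = 0 := by
    calc ∑ S : {S : Finset (Fin 6) // S.card = 3}, c S • (ι ℂ v * monF b 3 S)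
        = ι ℂ v * ∑ S : {S : Finset (Fin 6) // S.card = 3}, c S • monF b 3 S := by
          rw [Finset.mul_sum]; simp_rw [mul_smul_comm]
      _ = 0 := by rw [hc, hker]
  have hc0 : ∀ S : {S : Finset (Fin 6) // S.card = 3}, (0 : Fin 6) ∉ S.1 → c S = 0 := by
    rw [← Finset.sum_filter_add_sum_filter_not Finset.univ
      (fun S : {S : Finset (Fin 6) // S.card = 3} => (0 : Fin 6) ∈ S.1)] at hsum
    have hz : (∑ S ∈ Finset.univ.filter
        (fun S : {S : Finset (Fin 6) // S.card = 3} => (0 : Fin 6) ∈ S.1),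
        c S • (ι ℂ v * monF b 3 S)) = 0 :=
      Finset.sum_eq_zero fun S hS => by
        rw [mul_monF_of_mem b v hb0 S (Finset.mem_filter.mp hS).2, smul_zero]
    rw [hz, zero_add] at hsum
    rw [Finset.sum_subtype (p := fun S : {S : Finset (Fin 6) // S.card = 3} =>
        (0 : Fin 6) ∉ S.1) (Finset.univ.filter
        (fun S : {S : Finset (Fin 6) // S.card = 3} => ¬ (0 : Fin 6) ∈ S.1))
      (fun S => by simp) (fun S => c S • (ι ℂ v * monF b 3 S))] at hsum
    set p : {S : Finset (Fin 6) // S.card = 3} → Prop :=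
      fun S => ¬ (0 : Fin 6) ∈ S.1 with hp
    let g : Subtype p → {S : Finset (Fin 6) // S.card = 4} :=
      fun S => ⟨insert 0 S.1.1, by rw [Finset.card_insert_of_notMem S.2, S.1.2]⟩
    have hginj : Function.Injective g := by
      intro S T hST
      have h1 : insert 0 S.1.1 = insert 0 T.1.1 := congrArg Subtype.val hST
      have h2 : S.1.1 = T.1.1 := by
        rw [← Finset.erase_insert S.2, ← Finset.erase_insert T.2, h1]
      exact Subtype.ext (Subtype.ext h2)
    have hli4 : LinearIndependent ℂ (fun S : Subtype p => monF b 4 (g S)) :=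
      (monF_li b 4).comp g hginj
    have hsum' : ∑ S : Subtype p, c S.1 • monF b 4 (g S) = 0 := by
      rw [← hsum]
      apply Finset.sum_congr rfl
      intro S _
      rw [mul_monF_of_not_mem b v hb0 S.1 S.2]
    have hcz := Fintype.linearIndependent_iff.mp hli4 (fun S => c S.1) hsum'
    intro S h0
    exact hcz ⟨S, h0⟩
  rw [← hc]
  apply Submodule.sum_mem
  intro S _
  by_cases h0 : (0 : Fin 6) ∈ S.1
  · exact Submodule.smul_mem _ _ (Submodule.subset_span ⟨⟨S.1, S.2, h0⟩, rfl⟩)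
  · rw [hc0 S h0, zero_smul]
    exact Submodule.zero_mem _

lemma monJ_mul_monJ (hb0 : b 0 = v) (S T : J) : monJ b S * monJ b T = 0 := by
  obtain ⟨x, y, hS⟩ := monF_factor b v hb0 ⟨S.1, S.2.1⟩ S.2.2
  obtain ⟨z, w, hT⟩ := monF_factor b v hb0 ⟨T.1, T.2.1⟩ T.2.2
  rw [monJ, monJ, hS, hT]
  exact pair_zero v x y z w

lemma mul_zero_of_mem_Fv (hb0 : b 0 = v) (α β : ExteriorAlgebra ℂ V)
    (hα : α ∈ Fv V v) (hβ : β ∈ Fv V v) : α * β = 0 := by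
  obtain ⟨hα3, hαk⟩ := Submodule.mem_inf.mp hα
  obtain ⟨hβ3, hβk⟩ := Submodule.mem_inf.mp hβ
  have hαk' : ι ℂ v * α = 0 := by
    have := LinearMap.mem_ker.mp hαk; rwa [LinearMap.mulLeft_apply] at this
  have hβk' : ι ℂ v * β = 0 := by
    have := LinearMap.mem_ker.mp hβk; rwa [LinearMap.mulLeft_apply] at this
  have hαs := span_Fv b v hb0 α hα3 hαk'
  have hβs := span_Fv b v hb0 β hβ3 hβk'
  have h1 : ∀ S : J, monJ b S * β = 0 := by
    intro S
    have hker : Submodule.span ℂ (Set.range (monJ b)) ≤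
        LinearMap.ker (LinearMap.mulLeft ℂ (monJ b S)) := by
      rw [Submodule.span_le]
      rintro _ ⟨T, rfl⟩
      rw [SetLike.mem_coe, LinearMap.mem_ker, LinearMap.mulLeft_apply]
      exact monJ_mul_monJ b v hb0 S T
    have := hker hβs
    rwa [LinearMap.mem_ker, LinearMap.mulLeft_apply] at this
  have hker2 : Submodule.span ℂ (Set.range (monJ b)) ≤
      LinearMap.ker (LinearMap.mulRight ℂ β) := by
    rw [Submodule.span_le]
    rintro _ ⟨S, rfl⟩
    rw [SetLike.mem_coe, LinearMap.mem_ker, LinearMap.mulRight_apply]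
    exact h1 S
  have := hker2 hαs
  rwa [LinearMap.mem_ker, LinearMap.mulRight_apply] at this

lemma monJ_mem_Fv (hb0 : b 0 = v) (S : J) : monJ b S ∈ Fv V v :=
  Submodule.mem_inf.mpr ⟨monF_mem b 3 _, LinearMap.mem_ker.mpr (by
    rw [LinearMap.mulLeft_apply]
    exact mul_monF_of_mem b v hb0 ⟨S.1, S.2.1⟩ S.2.2)⟩

lemma finrank_Fv (hb0 : b 0 = v) : Module.finrank ℂ (Fv V v) = 10 := by
  let u : J → Fv V v := fun S => ⟨monJ b S, monJ_mem_Fv b v hb0 S⟩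
  have hu_li : LinearIndependent ℂ u := by
    apply LinearIndependent.of_comp (Fv V v).subtype
    exact (monF_li b 3).comp
      (fun S : J => (⟨S.1, S.2.1⟩ : {S : Finset (Fin 6) // S.card = 3}))
      (fun S T hST => Subtype.ext (congrArg
        (fun x : {S : Finset (Fin 6) // S.card = 3} => x.val) hST))
  have hu_top : ⊤ ≤ Submodule.span ℂ (Set.range u) := by
    intro x _
    refine mem_span_of_val_mem_span (Fv V v) u x ?_
    have h2 := Submodule.mem_inf.mp x.2
    have hk : ι ℂ v * (x : ExteriorAlgebra ℂ V) = 0 := by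
      have := LinearMap.mem_ker.mp h2.2; rwa [LinearMap.mulLeft_apply] at this
    exact span_Fv b v hb0 x.1 h2.1 hk
  rw [Module.finrank_eq_card_basis (Module.Basis.mk hu_li hu_top)]
  decide

end WithV
end FvAux

/-- Let `V` be a 6-dimensional complex vector space, `vol : ⋀⁶V ≃ ℂ` a volume
form and `(α,β)_V = vol (α ∧ β)` the induced symplectic form on `⋀³V`. For every
nonzero `v ∈ V`, the subspace `F_v = {α ∈ ⋀³V : v ∧ α = 0}` is isotropic of
dimension 10, i.e. a Lagrangian subspace of the 20-dimensional symplectic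
vector space `⋀³V`. -/
theorem Fv_lagrangian (V : Type*) [AddCommGroup V] [Module ℂ V]
    [FiniteDimensional ℂ V] (hdim : Module.finrank ℂ V = 6)
    (vol : (extPow V 6) →ₗ[ℂ] ℂ) (hvol : Function.Bijective vol)
    (v : V) (hv : v ≠ 0) :
    (∀ (α β : ExteriorAlgebra ℂ V) (hα : α ∈ Fv V v) (hβ : β ∈ Fv V v),
      wedgeForm V vol α β (Submodule.mem_inf.mp hα).1 (Submodule.mem_inf.mp hβ).1 = 0) ∧
    Module.finrank ℂ (Fv V v) = 10 := by
  classical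
  have hsing : LinearIndepOn ℂ id ({v} : Set V) :=
    LinearIndepOn.singleton hv
  let B0 := Module.Basis.extend hsing
  haveI : Fintype (hsing.extend (Set.subset_univ {v})) :=
    FiniteDimensional.fintypeBasisIndex B0
  have hcard : Fintype.card (hsing.extend (Set.subset_univ {v})) = 6 := by
    rw [← Module.finrank_eq_card_basis B0, hdim]
  have hvmem : v ∈ hsing.extend (Set.subset_univ {v}) := hsing.subset_extend _ rfl
  let e0 : Fin 6 ≃ (hsing.extend (Set.subset_univ {v})) :=
    (Fintype.equivFinOfCardEq hcard).symm
  let e : Fin 6 ≃ (hsing.extend (Set.subset_univ {v})) :=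
    (Equiv.swap (0 : Fin 6) (e0.symm ⟨v, hvmem⟩)).trans e0
  let b : Module.Basis (Fin 6) ℂ V := B0.reindex e.symm
  have hb0 : b 0 = v := by
    rw [Module.Basis.reindex_apply, Equiv.symm_symm]
    show B0 (e0 ((Equiv.swap (0 : Fin 6) (e0.symm ⟨v, hvmem⟩)) 0)) = v
    rw [Equiv.swap_apply_left, Equiv.apply_symm_apply]
    exact Module.Basis.extend_apply_self hsing ⟨v, hvmem⟩
  constructor
  · intro α β hα hβ
    exact FvAux.vol_aux (extPow V 6) vol (α * β) _
      (FvAux.mul_zero_of_mem_Fv b v hb0 α β hα hβ)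
  · exact FvAux.finrank_Fv b v hb0
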